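/- For every square-summable sequence (v_k)_{k≥1} of complex numbers, with c_k = (-1)^k·√2·exp((2k-1)·π²/2) / sinh((2k-1)·π²/2), the function g(x) = Σ_{k≥1} c_k·v_k·exp(-(2k-1)·(π/2)·x) satisfies ∫_0^∞ |g(x)|² dx ≤ 10 · Σ_{k≥1} |v_k|². Moreover, ∫_0^∞ |g(x)|² dx = (1/π) · Σ_{j≥1} Σ_{k≥1} c_j·conj(c_k)·v_j·conj(v_k) / (j + k - 1). -/

import Mathlib

open Real MeasureTheory

/-- The coefficients `c_k = (-1)^k √2 exp((2k-1)π²/2) / sinh((2k-1)π²/2)`, encoded with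
`cSeq k` standing for `c_{k+1}`. -/
noncomputable def cSeq (k : ℕ) : ℝ :=
  (-1 : ℝ) ^ (k + 1) * Real.sqrt 2 * Real.exp ((2 * (k : ℝ) + 1) * π ^ 2 / 2) /
    Real.sinh ((2 * (k : ℝ) + 1) * π ^ 2 / 2)

open Set

lemma arctan_lower {s : ℝ} (hs : 0 ≤ s) : s / (1 + s^2) ≤ Real.arctan s := by
  have key : ∀ x : ℝ, HasDerivAt (fun y => Real.arctan y - y/(1+y^2)) (2*x^2/(1+x^2)^2) x := by
    intro x
    have hx : (1+x^2) ≠ 0 := by positivity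
    have h2 : HasDerivAt (fun y : ℝ => y/(1+y^2)) ((1*(1+x^2) - x*(2*x^1))/(1+x^2)^2) x :=
      (hasDerivAt_id x).div ((hasDerivAt_pow 2 x).const_add 1) hx
    have h := (Real.hasDerivAt_arctan x).fun_sub h2
    refine h.congr_deriv ?_
    field_simp
    ring
  have hmono : Monotone (fun y => Real.arctan y - y/(1+y^2)) := by
    apply monotone_of_deriv_nonneg (fun x => (key x).differentiableAt)
    intro x
    rw [(key x).deriv]
    positivity
  have := hmono hs
  simp only [Real.arctan_zero, zero_div, sub_zero, zero_pow] at this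
  linarith [this]

lemma integral_exp_Ioi {b : ℝ} (hb : 0 < b) :
    ∫ x in Set.Ioi (0:ℝ), Real.exp (-(b * x)) = 1 / b := by
  have hderiv : ∀ x ∈ Set.Ici (0:ℝ), HasDerivAt (fun x => -Real.exp (-(b*x))/b) (Real.exp (-(b*x))) x := by
    intro x _
    have h1 : HasDerivAt (fun x : ℝ => -(b*x)) (-b) x := by
      simpa using ((hasDerivAt_id x).const_mul b).fun_neg
    have := (h1.exp.fun_neg).div_const b
    refine this.congr_deriv ?_
    have hb0 : b ≠ 0 := hb.ne'
    field_simp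
  have hint : IntegrableOn (fun x => Real.exp (-(b*x))) (Set.Ioi (0:ℝ)) := by
    simpa [neg_mul] using exp_neg_integrableOn_Ioi 0 hb
  have htend : Filter.Tendsto (fun x => -Real.exp (-(b*x))/b) Filter.atTop (nhds 0) := by
    have : Filter.Tendsto (fun x : ℝ => -(b*x)) Filter.atTop Filter.atBot := by
      apply Filter.tendsto_neg_atBot_iff.mpr
      exact Filter.Tendsto.const_mul_atTop hb Filter.tendsto_id
    have := (Real.tendsto_exp_atBot.comp this).neg.div_const b
    simpa using this
  have := integral_Ioi_of_hasDerivAt_of_tendsto' hderiv hint htend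
  rw [this]
  rw [mul_zero, neg_zero, Real.exp_zero]
  ring

lemma cSeq_sq_le (k : ℕ) : (cSeq k)^2 ≤ 10 := by
  set t := (2 * (k : ℝ) + 1) * π ^ 2 / 2 with ht
  have hk : (0:ℝ) ≤ (k:ℝ) := Nat.cast_nonneg k
  have hpi : 3 < π := Real.pi_gt_three
  have htpos : 0 < t := by rw [ht]; positivity
  have h2t : 9 ≤ 2 * t := by
    rw [ht]
    nlinarith
  have hE : (10:ℝ) ≤ Real.exp t ^ 2 := by
    have h1 := Real.add_one_le_exp (2*t)
    rw [pow_two, ← Real.exp_add, ← two_mul]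
    nlinarith
  have hsinh : 0 < Real.sinh t := Real.sinh_pos_iff.mpr htpos
  have hEpos : 0 < Real.exp t := Real.exp_pos t
  have h5 : Real.sqrt 5 ^ 2 = 5 := Real.sq_sqrt (by norm_num)
  have h5' : 2 ≤ Real.sqrt 5 := by nlinarith [Real.sqrt_nonneg 5]
  have hkey : Real.exp t ≤ Real.sqrt 5 * Real.sinh t := by
    rw [Real.sinh_eq, Real.exp_neg]
    have hEI : Real.exp t * (Real.exp t)⁻¹ = 1 := mul_inv_cancel₀ (ne_of_gt hEpos)
    have hIpos : 0 < (Real.exp t)⁻¹ := by positivity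
    have hmain : 2 * Real.exp t * Real.exp t ≤ Real.sqrt 5 * (Real.exp t - (Real.exp t)⁻¹) * Real.exp t := by
      have hexpand : Real.sqrt 5 * (Real.exp t - (Real.exp t)⁻¹) * Real.exp t
          = Real.sqrt 5 * (Real.exp t)^2 - Real.sqrt 5 := by
        field_simp
      rw [hexpand]
      nlinarith [mul_nonneg (sub_nonneg.mpr h5') (sub_nonneg.mpr hE)]
    have := le_of_mul_le_mul_right (by linarith [hmain] : 2 * Real.exp t * Real.exp t ≤ (Real.sqrt 5 * (Real.exp t - (Real.exp t)⁻¹)) * Real.exp t) hEpos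
    linarith
  have hsq : Real.exp t ^ 2 ≤ 5 * Real.sinh t ^ 2 := by nlinarith
  have hcs : (cSeq k)^2 = 2 * Real.exp t ^ 2 / Real.sinh t ^ 2 := by
    have h1 : ((-1:ℝ)^(k+1))^2 = 1 := by
      rw [← pow_mul, mul_comm, pow_mul]; simp
    rw [cSeq, ← ht, div_pow, mul_pow, mul_pow, h1, one_mul, Real.sq_sqrt (by norm_num : (2:ℝ) ≥ 0)]
  rw [hcs, div_le_iff₀ (by positivity)]
  nlinarith

lemma row_bound (j n : ℕ) :
    ∑ k ∈ Finset.range n, Real.sqrt ((j:ℝ)+1/2) / (((j:ℝ)+(k:ℝ)+1) * Real.sqrt ((k:ℝ)+1/2)) ≤ π := by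
  set r : ℝ := Real.sqrt ((j:ℝ)+1/2) with hrdef
  have hrpos : 0 < r := Real.sqrt_pos.mpr (by positivity)
  have hr2 : r^2 = (j:ℝ)+1/2 := Real.sq_sqrt (by positivity)
  set f : ℝ → ℝ := fun t => r / (((j:ℝ)+t+1) * Real.sqrt (t+1/2)) with hfdef
  set F : ℝ → ℝ := fun t => 2 * Real.arctan (Real.sqrt (t+1/2) / r) with hFdef
  have hderiv : ∀ t : ℝ, 0 ≤ t → HasDerivAt F (f t) t := by
    intro t ht
    have htpos : (0:ℝ) < t + 1/2 := by linarith
    have hs2 : Real.sqrt (t+1/2) ^ 2 = t + 1/2 := Real.sq_sqrt (le_of_lt htpos)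
    have hspos : 0 < Real.sqrt (t+1/2) := Real.sqrt_pos.mpr htpos
    have h1 : HasDerivAt (fun t : ℝ => t + 1/2) 1 t := (hasDerivAt_id t).add_const _
    have h2 : HasDerivAt (fun t : ℝ => Real.sqrt (t+1/2)) (1 / (2 * Real.sqrt (t+1/2))) t := by
      simpa using h1.sqrt (ne_of_gt htpos)
    have h3 := (h2.div_const r).arctan.const_mul 2
    refine h3.congr_deriv ?_
    simp only [hfdef]
    set q : ℝ := Real.sqrt (t+1/2) with hqdef
    have hjt : (j:ℝ)+t+1 ≠ 0 := by positivity
    have h5 : 1 + (q/r)^2 = ((j:ℝ)+t+1)/r^2 := by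
      rw [div_pow]
      field_simp
      rw [hr2, hs2]; ring
    rw [h5, one_div_div]
    field_simp
  rcases n with _ | m
  · simp [Real.pi_pos.le]
  rw [Finset.sum_range_succ']
  have hanti : AntitoneOn f (Icc (0:ℝ) (0 + m)) := by
    intro a ha b hb hab
    have ha' : (0:ℝ) < a + 1/2 := by have := ha.1; linarith
    have hb' : (0:ℝ) < b + 1/2 := by have := hb.1; linarith
    have hda : 0 < ((j:ℝ)+a+1) * Real.sqrt (a+1/2) := by
      apply mul_pos (by have := ha.1; positivity) (Real.sqrt_pos.mpr ha')
    apply div_le_div_of_nonneg_left hrpos.le hda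
    apply mul_le_mul (by linarith) (Real.sqrt_le_sqrt (by linarith)) (Real.sqrt_nonneg _) (by have := hb.1; positivity)
  have hsum := hanti.sum_le_integral
  have hcont : ContinuousOn f (uIcc (0:ℝ) (0 + m)) := by
    rw [uIcc_of_le (by positivity)]
    apply continuousOn_const.div
    · apply ContinuousOn.mul
      · fun_prop
      · exact (Real.continuous_sqrt.comp (by continuity)).continuousOn
    · intro x hx
      have hx0 : 0 ≤ x := by simpa using hx.1
      positivity
  have hFTC : ∫ x in (0:ℝ)..(0 + m), f x = F (0 + m) - F 0 := by
    apply intervalIntegral.integral_eq_sub_of_hasDerivAt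
    · intro x hx
      rw [uIcc_of_le (by positivity)] at hx
      exact hderiv x hx.1
    · exact hcont.intervalIntegrable
  have hsum2 : ∑ i ∈ Finset.range m, f (0 + (i + 1 : ℕ)) ≤ F (0 + m) - F 0 := by
    rw [← hFTC]; exact hsum
  have hFm : F (0 + m) ≤ π := by
    simp only [hFdef]
    have := Real.arctan_lt_pi_div_two (Real.sqrt ((0:ℝ) + m + 1/2) / r)
    linarith
  have hf0 : f 0 ≤ F 0 := by
    have hs2 : Real.sqrt ((0:ℝ)+1/2) ^ 2 = (0:ℝ) + 1/2 := Real.sq_sqrt (by norm_num)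
    have hspos : 0 < Real.sqrt ((0:ℝ)+1/2) := Real.sqrt_pos.mpr (by norm_num)
    simp only [hfdef, hFdef]
    set q : ℝ := Real.sqrt ((0:ℝ)+1/2) with hqdef
    set s : ℝ := q / r with hsdef
    have hsnn : 0 ≤ s := by positivity
    have harc := arctan_lower hsnn
    have hf0eq : r / (((j:ℝ)+0+1) * q) = 2 * (s / (1 + s^2)) := by
      rw [hsdef, div_pow]
      have h5 : 1 + q^2/r^2 = ((j:ℝ)+0+1)/r^2 := by
        field_simp
        rw [hr2, hs2]; ring
      rw [h5]
      field_simp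
      linear_combination (-2) * hs2
    rw [hf0eq]
    linarith
  calc ∑ k ∈ Finset.range m, Real.sqrt ((j:ℝ)+1/2) / (((j:ℝ)+((k+1:ℕ):ℝ)+1) * Real.sqrt (((k+1:ℕ):ℝ)+1/2))
        + Real.sqrt ((j:ℝ)+1/2) / (((j:ℝ)+((0:ℕ):ℝ)+1) * Real.sqrt (((0:ℕ):ℝ)+1/2))
      = ∑ i ∈ Finset.range m, f (0 + (i + 1 : ℕ)) + f 0 := by
        congr 1
        · apply Finset.sum_congr rfl
          intro i _
          simp only [hfdef, hrdef]
          push_cast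
          norm_num
        · simp only [hfdef, hrdef]
          norm_num
    _ ≤ (F (0 + m) - F 0) + F 0 := add_le_add hsum2 hf0
    _ ≤ π := by linarith

lemma amgm_aux {x y A B D : ℝ} (hA : 0 < A) (hB : 0 < B) (hD : 0 < D) :
    x*y/D ≤ (x^2 * (A/(D*B)) + y^2 * (B/(D*A)))/2 := by
  have hexp : (x^2 * (A/(D*B)) + y^2 * (B/(D*A)))/2 - x*y/D = (x*A - y*B)^2/(2*D*A*B) := by
    field_simp
    ring
  linarith [hexp ▸ div_nonneg (sq_nonneg (x*A-y*B)) (by positivity : (0:ℝ) ≤ 2*D*A*B),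
    div_nonneg (sq_nonneg (x*A-y*B)) (by positivity : (0:ℝ) ≤ 2*D*A*B), hexp.ge, hexp.le]

lemma hilbert {b : ℕ → ℝ} (hb : ∀ k, 0 ≤ b k) (h2 : Summable fun k => (b k)^2) :
    Summable (fun p : ℕ × ℕ => b p.1 * b p.2 / ((p.1 : ℝ) + (p.2 : ℝ) + 1)) ∧
    ∑' p : ℕ × ℕ, b p.1 * b p.2 / ((p.1:ℝ) + (p.2:ℝ) + 1) ≤ π * ∑' k, (b k)^2 := by
  set w : ℕ → ℕ → ℝ := fun j k => Real.sqrt ((j:ℝ)+1/2) / (((j:ℝ)+(k:ℝ)+1) * Real.sqrt ((k:ℝ)+1/2)) with hw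
  have hwnn : ∀ j k, 0 ≤ w j k := by
    intro j k
    apply div_nonneg (Real.sqrt_nonneg _)
    positivity
  set F : ℕ × ℕ → ℝ := fun p => (b p.1)^2 * w p.1 p.2 with hF
  have hFnn : ∀ p, 0 ≤ F p := fun p => mul_nonneg (sq_nonneg _) (hwnn _ _)
  have hrow : ∀ j, ∀ n, ∑ k ∈ Finset.range n, F (j, k) ≤ (b j)^2 * π := by
    intro j n
    rw [hF]
    simp only [← Finset.mul_sum]
    exact mul_le_mul_of_nonneg_left (row_bound j n) (sq_nonneg _)
  have hrowsum : ∀ j, Summable (fun k => F (j, k)) :=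
    fun j => summable_of_sum_range_le (fun k => hFnn _) (hrow j)
  have hrowtsum : ∀ j, ∑' k, F (j, k) ≤ (b j)^2 * π :=
    fun j => Real.tsum_le_of_sum_range_le (fun k => hFnn _) (hrow j)
  have hbpi : Summable (fun j => (b j)^2 * π) := h2.mul_right π
  have hFsum : Summable F := by
    apply (summable_prod_of_nonneg hFnn).mpr
    exact ⟨hrowsum, Summable.of_nonneg_of_le (fun j => tsum_nonneg (fun k => hFnn _)) hrowtsum hbpi⟩
  have hFtsum : ∑' p, F p ≤ π * ∑' k, (b k)^2 := by
    rw [Summable.tsum_prod' hFsum (fun j => hrowsum j)]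
    calc ∑' j, ∑' k, F (j, k) ≤ ∑' j, (b j)^2 * π :=
          Summable.tsum_le_tsum hrowtsum
            (Summable.of_nonneg_of_le (fun j => tsum_nonneg (fun k => hFnn _)) hrowtsum hbpi) hbpi
      _ = π * ∑' k, (b k)^2 := by rw [tsum_mul_right, mul_comm]
  set G : ℕ × ℕ → ℝ := fun p => F p.swap with hG
  have hGsum : Summable G := hFsum.prod_symm
  have hGtsum : ∑' p, G p = ∑' p, F p := by
    rw [hG]
    exact ((Equiv.prodComm ℕ ℕ).tsum_eq F)
  have key : ∀ p : ℕ × ℕ, b p.1 * b p.2 / ((p.1:ℝ) + (p.2:ℝ) + 1) ≤ (F p + G p)/2 := by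
    rintro ⟨j, k⟩
    have hA : 0 < Real.sqrt ((j:ℝ)+1/2) := Real.sqrt_pos.mpr (by positivity)
    have hB : 0 < Real.sqrt ((k:ℝ)+1/2) := Real.sqrt_pos.mpr (by positivity)
    have hD : 0 < (j:ℝ)+(k:ℝ)+1 := by positivity
    have hswap : ((k:ℝ)+(j:ℝ)+1) = ((j:ℝ)+(k:ℝ)+1) := by ring
    have hFp : F (j, k) = (b j)^2 * (Real.sqrt ((j:ℝ)+1/2) / (((j:ℝ)+(k:ℝ)+1) * Real.sqrt ((k:ℝ)+1/2))) := rfl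
    have hGp : G (j, k) = (b k)^2 * (Real.sqrt ((k:ℝ)+1/2) / (((j:ℝ)+(k:ℝ)+1) * Real.sqrt ((j:ℝ)+1/2))) := by
      show F (k, j) = _
      rw [hF]
      simp only [hw, hswap]
    rw [hFp, hGp]
    exact amgm_aux hA hB hD
  have hHnn : ∀ p : ℕ × ℕ, 0 ≤ b p.1 * b p.2 / ((p.1:ℝ) + (p.2:ℝ) + 1) := by
    intro p
    apply div_nonneg (mul_nonneg (hb _) (hb _)) (by positivity)
  have hFGsum : Summable (fun p => (F p + G p)/2) := (hFsum.add hGsum).div_const 2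
  have hHsum : Summable (fun p : ℕ × ℕ => b p.1 * b p.2 / ((p.1:ℝ) + (p.2:ℝ) + 1)) :=
    Summable.of_nonneg_of_le hHnn key hFGsum
  refine ⟨hHsum, ?_⟩
  calc ∑' p : ℕ × ℕ, b p.1 * b p.2 / ((p.1:ℝ) + (p.2:ℝ) + 1)
      ≤ ∑' p, (F p + G p)/2 := Summable.tsum_le_tsum key hHsum hFGsum
    _ = (∑' p, F p + ∑' p, G p)/2 := by rw [← Summable.tsum_add hFsum hGsum, tsum_div_const]
    _ = ∑' p, F p := by rw [hGtsum]; ring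
    _ ≤ π * ∑' k, (b k)^2 := hFtsum

/-- The function `g(x) = Σ_{k≥1} c_k v_k exp(-(2k-1)(π/2) x)` satisfies
`∫₀^∞ |g|² ≤ 10 Σ |v_k|²` and
`∫₀^∞ |g|² = (1/π) Σ_{j,k≥1} c_j c̄_k v_j v̄_k / (j+k-1)`.
(The sequence `(v_k)_{k≥1}` is encoded as `v : ℕ → ℂ` with `v k` standing for `v_{k+1}`,
so the denominator `j + k - 1` becomes `j + k + 1`.) -/
theorem g_integral_estimate_and_formula (v : ℕ → ℂ)
    (hv : Summable fun k : ℕ => ‖v k‖ ^ 2) :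
    (∫ x in Set.Ioi (0:ℝ),
        ‖∑' k : ℕ, (cSeq k : ℂ) * v k *
          (Real.exp (-(2 * (k : ℝ) + 1) * (π / 2) * x) : ℝ)‖ ^ 2)
      ≤ 10 * ∑' k : ℕ, ‖v k‖ ^ 2
    ∧ ((∫ x in Set.Ioi (0:ℝ),
        ‖∑' k : ℕ, (cSeq k : ℂ) * v k *
          (Real.exp (-(2 * (k : ℝ) + 1) * (π / 2) * x) : ℝ)‖ ^ 2 : ℝ) : ℂ)
      = (1 / (π : ℂ)) *
          ∑' p : ℕ × ℕ, (cSeq p.1 : ℂ) * (starRingEnd ℂ) ((cSeq p.2 : ℝ) : ℂ) *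
            v p.1 * (starRingEnd ℂ) (v p.2) / ((p.1 : ℂ) + (p.2 : ℂ) + 1) := by
  have hpi := Real.pi_pos
  set a : ℕ → ℂ := fun k => (cSeq k : ℂ) * v k with ha
  set b : ℕ → ℝ := fun k => ‖a k‖ with hbdef
  have hbnn : ∀ k, 0 ≤ b k := fun k => norm_nonneg _
  have hb2 : ∀ k, b k ^ 2 ≤ 10 * ‖v k‖^2 := by
    intro k
    have h1 : b k = |cSeq k| * ‖v k‖ := by
      simp [hbdef, ha, norm_mul, Complex.norm_real]
    rw [h1, mul_pow]
    have h2 := cSeq_sq_le k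
    have h0 : |cSeq k|^2 = (cSeq k)^2 := sq_abs _
    nlinarith [sq_nonneg (‖v k‖)]
  have hbsum : Summable (fun k => b k ^ 2) :=
    Summable.of_nonneg_of_le (fun k => sq_nonneg _) hb2 (hv.mul_left 10)
  have hbtsum : ∑' k, b k ^2 ≤ 10 * ∑' k, ‖v k‖^2 := by
    calc ∑' k, b k^2 ≤ ∑' k, 10 * ‖v k‖^2 := Summable.tsum_le_tsum hb2 hbsum (hv.mul_left 10)
      _ = 10 * ∑' k, ‖v k‖^2 := tsum_mul_left
  obtain ⟨hHsum, hHle⟩ := hilbert hbnn hbsum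
  -- the doubly-indexed family
  set f : ℕ × ℕ → ℝ → ℂ := fun p x =>
    a p.1 * (starRingEnd ℂ) (a p.2) *
      ((Real.exp (-((((p.1:ℕ):ℝ)+((p.2:ℕ):ℝ)+1) * π) * x) : ℝ) : ℂ) with hf
  have hDpos : ∀ p : ℕ × ℕ, 0 < (((p.1:ℕ):ℝ)+((p.2:ℕ):ℝ)+1) * π := fun p => by positivity
  have hnormf : ∀ (p : ℕ × ℕ) (x : ℝ),
      ‖f p x‖ = b p.1 * b p.2 * Real.exp (-((((p.1:ℕ):ℝ)+((p.2:ℕ):ℝ)+1) * π) * x) := by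
    intro p x
    rw [hf]
    simp only [norm_mul, RCLike.norm_conj, Complex.norm_real, Real.norm_eq_abs, Real.abs_exp]
    rfl
  have hfint : ∀ p : ℕ × ℕ, IntegrableOn (f p) (Ioi (0:ℝ)) := by
    intro p
    apply Integrable.const_mul
    exact (exp_neg_integrableOn_Ioi 0 (hDpos p)).ofReal
  have hintexp : ∀ p : ℕ × ℕ, ∫ x in Ioi (0:ℝ), Real.exp (-((((p.1:ℕ):ℝ)+((p.2:ℕ):ℝ)+1) * π) * x)
      = 1/((((p.1:ℕ):ℝ)+((p.2:ℕ):ℝ)+1) * π) := by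
    intro p
    rw [show (fun x : ℝ => Real.exp (-((((p.1:ℕ):ℝ)+((p.2:ℕ):ℝ)+1) * π) * x))
        = fun x : ℝ => Real.exp (-(((((p.1:ℕ):ℝ)+((p.2:ℕ):ℝ)+1) * π) * x)) by
      funext x; ring_nf]
    exact integral_exp_Ioi (hDpos p)
  have hfmeas : ∀ p : ℕ × ℕ, AEStronglyMeasurable (f p) (volume.restrict (Ioi (0:ℝ))) :=
    fun p => (hfint p).aestronglyMeasurable
  have hIval : ∀ p : ℕ × ℕ, ∫ x in Ioi (0:ℝ), f p x
      = a p.1 * (starRingEnd ℂ) (a p.2) * ((1/((((p.1:ℕ):ℝ)+((p.2:ℕ):ℝ)+1) * π) : ℝ) : ℂ) := by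
    intro p
    rw [hf]
    simp only []
    rw [MeasureTheory.integral_const_mul, ← hintexp p]
    congr 1
    exact integral_ofReal
  have hIabs : ∀ p : ℕ × ℕ, ∫ x in Ioi (0:ℝ), ‖f p x‖
      = b p.1 * b p.2 * (1/((((p.1:ℕ):ℝ)+((p.2:ℕ):ℝ)+1) * π)) := by
    intro p
    simp_rw [hnormf p]
    rw [MeasureTheory.integral_const_mul, hintexp p]
  have hIeq : ∀ p : ℕ × ℕ, b p.1 * b p.2 * (1/((((p.1:ℕ):ℝ)+((p.2:ℕ):ℝ)+1) * π))
      = (b p.1 * b p.2 / (((p.1:ℕ):ℝ)+((p.2:ℕ):ℝ)+1)) * (1/π) := by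
    intro p
    have h0 : (((p.1:ℕ):ℝ)+((p.2:ℕ):ℝ)+1) ≠ 0 := by positivity
    field_simp
  have hIsum : Summable (fun p : ℕ × ℕ =>
      b p.1 * b p.2 * (1/((((p.1:ℕ):ℝ)+((p.2:ℕ):ℝ)+1) * π))) := by
    simp_rw [hIeq]
    exact hHsum.mul_right _
  have hItsum : ∑' p : ℕ × ℕ, b p.1 * b p.2 * (1/((((p.1:ℕ):ℝ)+((p.2:ℕ):ℝ)+1) * π))
      ≤ ∑' k, b k ^ 2 := by
    calc ∑' p : ℕ × ℕ, b p.1 * b p.2 * (1/((((p.1:ℕ):ℝ)+((p.2:ℕ):ℝ)+1) * π))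
        = (∑' p : ℕ × ℕ, b p.1 * b p.2 / (((p.1:ℕ):ℝ)+((p.2:ℕ):ℝ)+1)) * (1/π) := by
          simp_rw [hIeq]; exact tsum_mul_right
      _ ≤ (π * ∑' k, b k ^2) * (1/π) := by
          apply mul_le_mul_of_nonneg_right hHle (by positivity)
      _ = ∑' k, b k ^2 := by field_simp
  have hlint : ∑' p : ℕ × ℕ, ∫⁻ x in Ioi (0:ℝ), ‖f p x‖₊ ≠ ⊤ := by
    have h1 : ∀ p : ℕ × ℕ, ∫⁻ x in Ioi (0:ℝ), ‖f p x‖₊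
        = ENNReal.ofReal (b p.1 * b p.2 * (1/((((p.1:ℕ):ℝ)+((p.2:ℕ):ℝ)+1) * π))) := by
      intro p
      rw [← hIabs p]; exact (ofReal_integral_norm_eq_lintegral_enorm (hfint p)).symm
    have hnn : ∀ p : ℕ × ℕ,
        0 ≤ b p.1 * b p.2 * (1/((((p.1:ℕ):ℝ)+((p.2:ℕ):ℝ)+1) * π)) := by
      intro p
      have := hbnn p.1; have := hbnn p.2
      positivity
    simp_rw [h1]
    rw [← ENNReal.ofReal_tsum_of_nonneg hnn hIsum]
    exact ENNReal.ofReal_ne_top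
  -- pointwise identity on (0, ∞)
  have hpointwise : EqOn
      (fun x : ℝ => ((‖∑' k : ℕ, (cSeq k : ℂ) * v k *
          (Real.exp (-(2 * (k : ℝ) + 1) * (π / 2) * x) : ℝ)‖ ^ 2 : ℝ) : ℂ))
      (fun x : ℝ => ∑' p : ℕ × ℕ, f p x) (Ioi (0:ℝ)) := by
    intro x hx
    rw [mem_Ioi] at hx
    simp only []
    set U : ℕ → ℂ := fun k =>
      (cSeq k : ℂ) * v k * ((Real.exp (-(2 * (k : ℝ) + 1) * (π / 2) * x) : ℝ) : ℂ) with hU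
    have hUnorm : ∀ k, ‖U k‖ = b k * Real.exp (-(2 * (k : ℝ) + 1) * (π / 2) * x) := by
      intro k
      rw [hU]
      simp only [norm_mul, Complex.norm_real, Real.norm_eq_abs, Real.abs_exp]
      rw [hbdef, ha]
      simp [norm_mul]
    have hM : ∀ k, b k ≤ Real.sqrt (∑' k, b k ^ 2) := by
      intro k
      have h1 : b k ^2 ≤ ∑' k, b k ^2 := Summable.le_tsum hbsum k (fun _ _ => sq_nonneg _)
      have := Real.sqrt_le_sqrt h1
      rwa [Real.sqrt_sq (hbnn k)] at this
    have hgeo : Summable (fun k : ℕ =>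
        (Real.sqrt (∑' k, b k ^ 2) * Real.exp (-(π/2) * x)) * Real.exp (-(π * x)) ^ k) :=
      (summable_geometric_of_lt_one (Real.exp_nonneg _)
        ((Real.exp_lt_one_iff).mpr (by nlinarith))).mul_left _
    have hUnormsum : Summable (fun k => ‖U k‖) := by
      apply Summable.of_nonneg_of_le (fun k => norm_nonneg _) ?_ hgeo
      intro k
      rw [hUnorm k]
      have hsplit : -(2 * (k : ℝ) + 1) * (π / 2) * x = (k:ℝ) * (-(π * x)) + (-(π/2) * x) := by
        ring
      rw [hsplit, Real.exp_add, Real.exp_nat_mul]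
      calc b k * (Real.exp (-(π * x)) ^ k * Real.exp (-(π/2) * x))
          ≤ Real.sqrt (∑' k, b k ^ 2) * (Real.exp (-(π * x)) ^ k * Real.exp (-(π/2) * x)) := by
            apply mul_le_mul_of_nonneg_right (hM k)
            positivity
        _ = Real.sqrt (∑' k, b k ^ 2) * Real.exp (-(π/2) * x) * Real.exp (-(π * x)) ^ k := by
            ring
    have hUsum : Summable U := Summable.of_norm hUnormsum
    have hconjnorm : Summable (fun k => ‖(starRingEnd ℂ) (U k)‖) := by
      simpa only [RCLike.norm_conj] using hUnormsum
    have hsq : ((‖∑' k, U k‖^2 : ℝ) : ℂ) = (∑' k, U k) * (starRingEnd ℂ) (∑' k, U k) := by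
      rw [Complex.mul_conj, Complex.normSq_eq_norm_sq]
    calc ((‖∑' k, U k‖^2 : ℝ) : ℂ)
        = (∑' k, U k) * (starRingEnd ℂ) (∑' k, U k) := hsq
      _ = (∑' k, U k) * (∑' k, (starRingEnd ℂ) (U k)) := by rw [RCLike.conj_tsum]
      _ = ∑' p : ℕ × ℕ, U p.1 * (starRingEnd ℂ) (U p.2) :=
          tsum_mul_tsum_of_summable_norm hUnormsum hconjnorm
      _ = ∑' p : ℕ × ℕ, f p x := by
          apply tsum_congr
          rintro ⟨j, k⟩
          simp only [hU, hf, ha, map_mul, Complex.conj_ofReal]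
          have hexp : Real.exp (-(2*(j:ℝ)+1) * (π/2) * x) * Real.exp (-(2*(k:ℝ)+1) * (π/2) * x)
              = Real.exp (-(((j:ℝ)+(k:ℝ)+1) * π) * x) := by
            rw [← Real.exp_add]
            congr 1
            ring
          rw [← hexp, Complex.ofReal_mul]
          ring
  have hmain : ((∫ x in Ioi (0:ℝ), ‖∑' k : ℕ, (cSeq k : ℂ) * v k *
        ((Real.exp (-(2 * (k:ℝ) + 1) * (π/2) * x) : ℝ) : ℂ)‖^2 : ℝ) : ℂ)
      = ∑' p : ℕ × ℕ, ∫ x in Ioi (0:ℝ), f p x := by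
    calc ((∫ x in Ioi (0:ℝ), ‖∑' k : ℕ, (cSeq k : ℂ) * v k *
            ((Real.exp (-(2 * (k:ℝ) + 1) * (π/2) * x) : ℝ) : ℂ)‖^2 : ℝ) : ℂ)
        = ∫ x in Ioi (0:ℝ), ((‖∑' k : ℕ, (cSeq k : ℂ) * v k *
            ((Real.exp (-(2 * (k:ℝ) + 1) * (π/2) * x) : ℝ) : ℂ)‖^2 : ℝ) : ℂ) := integral_ofReal.symm
      _ = ∫ x in Ioi (0:ℝ), ∑' p : ℕ × ℕ, f p x :=
          setIntegral_congr_fun measurableSet_Ioi hpointwise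
      _ = ∑' p : ℕ × ℕ, ∫ x in Ioi (0:ℝ), f p x := integral_tsum hfmeas hlint
  have hpart2 : ((∫ x in Ioi (0:ℝ), ‖∑' k : ℕ, (cSeq k : ℂ) * v k *
        ((Real.exp (-(2 * (k:ℝ) + 1) * (π/2) * x) : ℝ) : ℂ)‖^2 : ℝ) : ℂ)
      = (1 / (π : ℂ)) * ∑' p : ℕ × ℕ, (cSeq p.1 : ℂ) * (starRingEnd ℂ) ((cSeq p.2 : ℝ) : ℂ) *
          v p.1 * (starRingEnd ℂ) (v p.2) / ((p.1 : ℂ) + (p.2 : ℂ) + 1) := by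
    rw [hmain, ← tsum_mul_left]
    apply tsum_congr
    rintro ⟨j, k⟩
    rw [hIval ⟨j, k⟩]
    simp only [ha, map_mul, Complex.conj_ofReal]
    have hD0 : ((j:ℂ) + (k:ℂ) + 1) ≠ 0 := by
      have h1 : ((j:ℂ) + (k:ℂ) + 1) = (((j:ℝ) + (k:ℝ) + 1 : ℝ) : ℂ) := by push_cast; ring
      rw [h1]
      exact Complex.ofReal_ne_zero.mpr (by positivity)
    have hpi0 : ((π:ℝ) : ℂ) ≠ 0 := Complex.ofReal_ne_zero.mpr (ne_of_gt hpi)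
    push_cast
    field_simp
  have hnormI : ∀ p : ℕ × ℕ, ‖∫ x in Ioi (0:ℝ), f p x‖
      = b p.1 * b p.2 * (1/((((p.1:ℕ):ℝ)+((p.2:ℕ):ℝ)+1) * π)) := by
    intro p
    rw [hIval p]
    simp only [norm_mul, RCLike.norm_conj, Complex.norm_real, Real.norm_eq_abs]
    rw [abs_of_nonneg (by positivity : (0:ℝ) ≤ 1/((((p.1:ℕ):ℝ)+((p.2:ℕ):ℝ)+1) * π))]
  have hsumnormI : Summable (fun p : ℕ × ℕ => ‖∫ x in Ioi (0:ℝ), f p x‖) := by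
    simp_rw [hnormI]
    exact hIsum
  have hpart1 : (∫ x in Ioi (0:ℝ), ‖∑' k : ℕ, (cSeq k : ℂ) * v k *
        ((Real.exp (-(2 * (k:ℝ) + 1) * (π/2) * x) : ℝ) : ℂ)‖^2 : ℝ)
      ≤ 10 * ∑' k : ℕ, ‖v k‖^2 := by
    calc (∫ x in Ioi (0:ℝ), ‖∑' k : ℕ, (cSeq k : ℂ) * v k *
            ((Real.exp (-(2 * (k:ℝ) + 1) * (π/2) * x) : ℝ) : ℂ)‖^2 : ℝ)
        ≤ |(∫ x in Ioi (0:ℝ), ‖∑' k : ℕ, (cSeq k : ℂ) * v k *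
            ((Real.exp (-(2 * (k:ℝ) + 1) * (π/2) * x) : ℝ) : ℂ)‖^2 : ℝ)| := le_abs_self _
      _ = ‖((∫ x in Ioi (0:ℝ), ‖∑' k : ℕ, (cSeq k : ℂ) * v k *
            ((Real.exp (-(2 * (k:ℝ) + 1) * (π/2) * x) : ℝ) : ℂ)‖^2 : ℝ) : ℂ)‖ := by
          rw [Complex.norm_real, Real.norm_eq_abs]
      _ = ‖∑' p : ℕ × ℕ, ∫ x in Ioi (0:ℝ), f p x‖ := by rw [hmain]
      _ ≤ ∑' p : ℕ × ℕ, ‖∫ x in Ioi (0:ℝ), f p x‖ := norm_tsum_le_tsum_norm hsumnormI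
      _ = ∑' p : ℕ × ℕ, b p.1 * b p.2 * (1/((((p.1:ℕ):ℝ)+((p.2:ℕ):ℝ)+1) * π)) := by
          simp_rw [hnormI]
      _ ≤ ∑' k, b k ^ 2 := hItsum
      _ ≤ 10 * ∑' k : ℕ, ‖v k‖^2 := hbtsum
  exact ⟨hpart1, hpart2⟩
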